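/- Let ℓ ≥ 2 and n ≥ 1. The n-th power Ω_ℓⁿ ∈ U(so(4ℓ,ℂ)) satisfies: (a) [E, Ω_ℓⁿ] = 0 for every simple positive root vector E of so(4ℓ,ℂ) (i.e. for E = e_{ε_k−ε_{k+1}}, 1 ≤ k ≤ 2ℓ−1, and E = e_{ε_{2ℓ−1}+ε_{2ℓ}}); and (b) [H(a), Ω_ℓⁿ] = n(a₁+⋯+a_{2ℓ}) Ω_ℓⁿ for every a ∈ ℂ^{2ℓ}. Thus Ω_ℓⁿ is a highest weight vector of weight 2nω_{2ℓ} = n(ε₁+⋯+ε_{2ℓ}) for the adjoint action of so(4ℓ,ℂ) on its universal enveloping algebra. (This is the finite-dimensional Lie-algebraic content of the theorem that w_n is a singular vector in V^{n−2ℓ+1}(D_{2ℓ}).) -/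

import Mathlib

open Matrix

attribute [local instance 100] LieRing.ofAssociativeRing

noncomputable section

/-- The symmetric `2n × 2n` matrix `G` with `G_{i, n+i} = G_{n+i, i} = 1` (`1 ≤ i ≤ n`) and all
other entries zero (written here with 0-indexed indices `0, …, 2n-1`). -/
def Gmat (n : ℕ) : Matrix (Fin (2*n)) (Fin (2*n)) ℂ :=
  Matrix.of fun i j => if (i : ℕ) + n = (j : ℕ) ∨ (j : ℕ) + n = (i : ℕ) then 1 else 0

/-- The split orthogonal Lie algebra `so(2n, ℂ)`: the Lie algebra of `2n × 2n` complex
matrices `X` with `Xᵀ G + G X = 0`, i.e. the skew-adjoint matrices for the form `Gmat n`. -/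
def so (n : ℕ) : LieSubalgebra ℂ (Matrix (Fin (2*n)) (Fin (2*n)) ℂ) :=
  skewAdjointMatricesLieSubalgebra (Gmat n)

/-- The inclusion `{0, …, n-1} ⊆ {0, …, 2n-1}` of indices. -/
def lo {n : ℕ} (i : Fin n) : Fin (2*n) := ⟨(i : ℕ), by have := i.isLt; omega⟩

/-- The index `n + i ∈ {n, …, 2n-1}`. -/
def hi {n : ℕ} (i : Fin n) : Fin (2*n) := ⟨n + (i : ℕ), by have := i.isLt; omega⟩

/-- The matrix `e_{ε_i − ε_j} = E_{i,j} − E_{n+j, n+i}`. -/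
def eM {n : ℕ} (i j : Fin n) : Matrix (Fin (2*n)) (Fin (2*n)) ℂ :=
  Matrix.single (lo i) (lo j) 1 - Matrix.single (hi j) (hi i) 1

/-- The matrix `e_{ε_i + ε_j} = E_{i,n+j} − E_{j, n+i}`. -/
def eP {n : ℕ} (i j : Fin n) : Matrix (Fin (2*n)) (Fin (2*n)) ℂ :=
  Matrix.single (lo i) (hi j) 1 - Matrix.single (lo j) (hi i) 1

/-- The "swap" `b ↦ b ± n` on indices, so that `Gmat n k b = δ_{k, Gsw b}`. -/
def Gsw {n : ℕ} (b : Fin (2*n)) : Fin (2*n) :=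
  ⟨if (b:ℕ) < n then (b:ℕ) + n else (b:ℕ) - n, by have := b.isLt; split <;> omega⟩

lemma Gmat_apply {n : ℕ} (k b : Fin (2*n)) :
    Gmat n k b = if k = Gsw b then 1 else 0 := by
  have hk := k.isLt; have hb := b.isLt
  have h : ((k:ℕ) + n = (b:ℕ) ∨ (b:ℕ) + n = (k:ℕ)) ↔ (k = Gsw b) := by
    rw [Fin.ext_iff]
    show _ ↔ (k:ℕ) = if (b:ℕ) < n then (b:ℕ) + n else (b:ℕ) - n
    split <;> omega
  simp only [Gmat, Matrix.of_apply]
  rw [if_congr h rfl rfl]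

lemma mul_Gmat_apply {n : ℕ} (M : Matrix (Fin (2*n)) (Fin (2*n)) ℂ) (a b : Fin (2*n)) :
    (M * Gmat n) a b = M a (Gsw b) := by
  rw [Matrix.mul_apply]
  rw [Finset.sum_congr rfl fun k _ => by rw [Gmat_apply]]
  simp

lemma Gmat_mul_apply {n : ℕ} (M : Matrix (Fin (2*n)) (Fin (2*n)) ℂ) (a b : Fin (2*n)) :
    (Gmat n * M) a b = M (Gsw a) b := by
  rw [Matrix.mul_apply]
  have h' : ∀ k : Fin (2*n), Gmat n a k = if k = Gsw a then 1 else 0 := by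
    intro k
    have hk := k.isLt; have ha := a.isLt
    have h : ((a:ℕ) + n = (k:ℕ) ∨ (k:ℕ) + n = (a:ℕ)) ↔ (k = Gsw a) := by
      rw [Fin.ext_iff]
      show _ ↔ (k:ℕ) = if (a:ℕ) < n then (a:ℕ) + n else (a:ℕ) - n
      split <;> omega
    simp only [Gmat, Matrix.of_apply]
    rw [if_congr h rfl rfl]
  rw [Finset.sum_congr rfl fun k _ => by rw [h' k]]
  simp

theorem eM_mem {n : ℕ} (i j : Fin n) : eM i j ∈ so n := by
  rw [so, mem_skewAdjointMatricesLieSubalgebra, mem_skewAdjointMatricesSubmodule]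
  show (eM i j)ᵀ * Gmat n = Gmat n * (-(eM i j))
  ext a b
  rw [mul_Gmat_apply, Gmat_mul_apply]
  have hi' := i.isLt; have hj' := j.isLt
  have ha := a.isLt; have hb := b.isLt
  simp only [eM, Matrix.transpose_apply, Matrix.neg_apply, Matrix.sub_apply,
    Matrix.single, Matrix.of_apply, lo, hi, Gsw, Fin.ext_iff]
  split_ifs <;> first | omega | norm_num

theorem eP_mem {n : ℕ} (i j : Fin n) : eP i j ∈ so n := by
  rw [so, mem_skewAdjointMatricesLieSubalgebra, mem_skewAdjointMatricesSubmodule]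
  show (eP i j)ᵀ * Gmat n = Gmat n * (-(eP i j))
  ext a b
  rw [mul_Gmat_apply, Gmat_mul_apply]
  have hi' := i.isLt; have hj' := j.isLt
  have ha := a.isLt; have hb := b.isLt
  simp only [eP, Matrix.transpose_apply, Matrix.neg_apply, Matrix.sub_apply,
    Matrix.single, Matrix.of_apply, lo, hi, Gsw, Fin.ext_iff]
  split_ifs <;> first | omega | norm_num

/-- `e_{ε_i − ε_j}` as an element of `so(2n, ℂ)`. -/
def eMinus {n : ℕ} (i j : Fin n) : so n := ⟨eM i j, eM_mem i j⟩

/-- `e_{ε_i + ε_j}` as an element of `so(2n, ℂ)`. -/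
def ePlus {n : ℕ} (i j : Fin n) : so n := ⟨eP i j, eP_mem i j⟩

/-- The Cartan element `H(a) = Σ_i a_i (E_{i,i} − E_{n+i,n+i})` as a matrix. -/
def Hmat {n : ℕ} (a : Fin n → ℂ) : Matrix (Fin (2*n)) (Fin (2*n)) ℂ :=
  ∑ i, a i • (Matrix.single (lo i) (lo i) 1 - Matrix.single (hi i) (hi i) 1)

theorem Hmat_mem {n : ℕ} (a : Fin n → ℂ) : Hmat a ∈ so n := by
  rw [so, mem_skewAdjointMatricesLieSubalgebra, mem_skewAdjointMatricesSubmodule]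
  show (Hmat a)ᵀ * Gmat n = Gmat n * (-(Hmat a))
  ext x y
  rw [mul_Gmat_apply, Gmat_mul_apply]
  have hx := x.isLt; have hy := y.isLt
  simp only [Hmat, Matrix.transpose_apply, Matrix.neg_apply, Matrix.sum_apply,
    Matrix.smul_apply, Matrix.sub_apply, Matrix.single, Matrix.of_apply,
    smul_eq_mul, neg_eq_iff_eq_neg, ← Finset.sum_neg_distrib]
  apply Finset.sum_congr rfl
  intro i _
  have hi' := i.isLt
  simp only [lo, hi, Gsw, Fin.ext_iff]
  split_ifs <;> first | omega | ring

/-- `H(a)` as an element of `so(2n, ℂ)` (the general element of the diagonal Cartan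
subalgebra). -/
def Hcar {n : ℕ} (a : Fin n → ℂ) : so n := ⟨Hmat a, Hmat_mem a⟩

/-- The universal enveloping algebra `U(so(2n, ℂ))`. -/
abbrev Uso (n : ℕ) : Type := UniversalEnvelopingAlgebra ℂ (so n)

/-- The canonical embedding `so(2n, ℂ) → U(so(2n, ℂ))`. -/
def uι {n : ℕ} (x : so n) : Uso n := UniversalEnvelopingAlgebra.ι ℂ x

/-- The set `Π_ℓ` of fixed-point-free involutions of `{1, …, 2ℓ}` (realised on `Fin (2ℓ)`):
permutations `p` with `p² = 1` and `p(i) ≠ i` for all `i`. -/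
def FPFI (l : ℕ) : Finset (Equiv.Perm (Fin (2*l))) :=
  Finset.univ.filter fun p => p * p = 1 ∧ ∀ i, p i ≠ i

/-- The increasing list `i₁ < i₂ < ⋯ < i_ℓ` of left endpoints `{i | i < p i}` of the pairs of a
fixed-point-free involution `p`. -/
def leftPoints (l : ℕ) (p : Equiv.Perm (Fin (2*l))) : List (Fin (2*l)) :=
  (Finset.univ.filter fun i => i < p i).sort (· ≤ ·)

/-- The list `[i₁, j₁, i₂, j₂, …, i_ℓ, j_ℓ]` coming from the canonical decomposition of a
fixed-point-free involution `p` into disjoint transpositions `(i₁ j₁)⋯(i_ℓ j_ℓ)` with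
`i_h < j_h` for all `h` and `i₁ < ⋯ < i_ℓ`. -/
def pairList (l : ℕ) (p : Equiv.Perm (Fin (2*l))) : List (Fin (2*l)) :=
  (leftPoints l p).flatMap fun i => [i, p i]

/-- The function underlying the permutation `p̄` defined by `p̄(2h−1) = i_h`, `p̄(2h) = j_h`. -/
def pbarFun (l : ℕ) (p : Equiv.Perm (Fin (2*l))) (k : Fin (2*l)) : Fin (2*l) :=
  (pairList l p).getD (k : ℕ) k

/-- The permutation `p̄ ∈ S_{2ℓ}` with `p̄(2h−1) = i_h` and `p̄(2h) = j_h`; for a fixed-point-free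
involution `p` the function `pbarFun l p` is bijective and `p̄` is the induced permutation. -/
def pbar (l : ℕ) (p : Equiv.Perm (Fin (2*l))) : Equiv.Perm (Fin (2*l)) :=
  if h : Function.Bijective (pbarFun l p) then Equiv.ofBijective _ h else 1

/-- The sign `s(p) = sign(p̄) ∈ {±1}` of a fixed-point-free involution, viewed in `ℂ`. -/
def sgn (l : ℕ) (p : Equiv.Perm (Fin (2*l))) : ℂ :=
  ((Equiv.Perm.sign (pbar l p) : ℤ) : ℂ)

/-- The element `Ω_ℓ = Σ_{p ∈ Π_ℓ} s(p) · e_{ε_{i₁}+ε_{j₁}} ⋯ e_{ε_{i_ℓ}+ε_{j_ℓ}}` of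
`U(so(4ℓ, ℂ))`, where for each `p ∈ Π_ℓ` the pairs `(i_h, j_h)` are those of its canonical
decomposition (the factors pairwise commute, and are taken in the canonical order). -/
def Omega (l : ℕ) : Uso (2*l) :=
  ∑ p ∈ FPFI l, sgn l p • ((leftPoints l p).map fun i => uι (ePlus i (p i))).prod


section LiePart

lemma std_mul {N : ℕ} (a b c d : Fin N) :
    Matrix.single a b (1:ℂ) * Matrix.single c d 1
      = if b = c then Matrix.single a d 1 else 0 := by
  split
  · subst ‹b = c›
    rw [Matrix.single_mul_single_same, one_mul]
  · simp [‹b ≠ c›]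

variable {n : ℕ}

lemma lo_inj : Function.Injective (lo (n := n)) := by
  intro i j h; rwa [lo, lo, Fin.mk.injEq, ← Fin.ext_iff] at h

lemma hi_inj : Function.Injective (hi (n := n)) := by
  intro i j h
  rw [hi, hi, Fin.mk.injEq] at h
  exact Fin.ext (by omega)

lemma lo_ne_hi (i j : Fin n) : lo i ≠ hi j := by
  rw [lo, hi, ne_eq, Fin.mk.injEq]
  have := i.isLt; omega

lemma hi_ne_lo (i j : Fin n) : hi i ≠ lo j := (lo_ne_hi j i).symm

lemma lo_eq_lo {i j : Fin n} : lo i = lo j ↔ i = j := lo_inj.eq_iff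
lemma hi_eq_hi {i j : Fin n} : hi i = hi j ↔ i = j := hi_inj.eq_iff

lemma eP_mul_eP (i j i' j' : Fin n) : eP i j * eP i' j' = 0 := by
  simp [eP, sub_mul, mul_sub, std_mul, hi_ne_lo]

lemma eP_anti (i j : Fin n) : eP j i = - eP i j := by
  rw [eP, eP]; abel

lemma eP_diag (i : Fin n) : eP i i = 0 := by
  rw [eP, sub_self]

lemma eM_bracket_eP (k m i j : Fin n) :
    eM k m * eP i j - eP i j * eM k m
      = (if m = i then eP k j else 0) + (if m = j then eP i k else 0) := by
  rcases eq_or_ne m i with rfl | h1 <;> rcases eq_or_ne m j with rfl | h2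
  · -- i = j = m
    rw [eP_diag, mul_zero, zero_mul, sub_self, if_pos rfl, if_pos rfl, eP_anti k m, add_neg_cancel]
  · simp only [if_pos rfl, if_neg h2, add_zero, eM, eP, sub_mul, mul_sub, std_mul,
      lo_eq_lo, hi_eq_hi, lo_ne_hi, hi_ne_lo, h2, h2.symm, if_true, if_false, eq_self_iff_true]
    abel
  · simp only [if_pos rfl, if_neg h1, zero_add, eM, eP, sub_mul, mul_sub, std_mul,
      lo_eq_lo, hi_eq_hi, lo_ne_hi, hi_ne_lo, h1, h1.symm, if_true, if_false, eq_self_iff_true]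
    abel
  · simp only [if_neg h1, if_neg h2, add_zero, eM, eP, sub_mul, mul_sub, std_mul,
      lo_eq_lo, hi_eq_hi, lo_ne_hi, hi_ne_lo, h1, h2, h1.symm, h2.symm, if_false]
    abel

lemma Dmat_bracket_eP (s i j : Fin n) :
    (Matrix.single (lo s) (lo s) (1:ℂ) - Matrix.single (hi s) (hi s) 1) * eP i j
      - eP i j * (Matrix.single (lo s) (lo s) 1 - Matrix.single (hi s) (hi s) 1)
      = ((if s = i then (1:ℂ) else 0) + if s = j then 1 else 0) • eP i j := by
  rcases eq_or_ne s i with rfl | h1 <;> rcases eq_or_ne s j with rfl | h2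
  · rw [eP_diag, smul_zero, mul_zero, zero_mul, sub_self]
  · simp only [if_pos rfl, if_neg h2, add_zero, eP, sub_mul, mul_sub, std_mul,
      lo_eq_lo, hi_eq_hi, lo_ne_hi, hi_ne_lo, h2, h2.symm, if_true, if_false, smul_sub, one_smul]
    abel
  · simp only [if_pos rfl, if_neg h1, zero_add, eP, sub_mul, mul_sub, std_mul,
      lo_eq_lo, hi_eq_hi, lo_ne_hi, hi_ne_lo, h1, h1.symm, if_true, if_false, smul_sub, one_smul]
    abel
  · simp only [if_neg h1, if_neg h2, add_zero, eP, sub_mul, mul_sub, std_mul,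
      lo_eq_lo, hi_eq_hi, lo_ne_hi, hi_ne_lo, h1, h2, h1.symm, h2.symm, if_false, zero_smul]
    abel

lemma Hmat_bracket_eP (a : Fin n → ℂ) (i j : Fin n) :
    Hmat a * eP i j - eP i j * Hmat a = (a i + a j) • eP i j := by
  rw [Hmat, Finset.sum_mul, Finset.mul_sum, ← Finset.sum_sub_distrib]
  have key : ∀ s : Fin n, (a s • (Matrix.single (lo s) (lo s) (1:ℂ) - Matrix.single (hi s) (hi s) 1)) * eP i j
      - eP i j * (a s • (Matrix.single (lo s) (lo s) 1 - Matrix.single (hi s) (hi s) 1))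
      = ((if s = i then a s else 0) + if s = j then a s else 0) • eP i j := by
    intro s
    rw [smul_mul_assoc, mul_smul_comm, ← smul_sub, Dmat_bracket_eP, smul_smul]
    congr 1
    split_ifs <;> ring
  rw [Finset.sum_congr rfl fun s _ => key s, ← Finset.sum_smul]
  congr 1
  rw [Finset.sum_add_distrib]
  simp [Finset.sum_ite_eq']

end LiePart
set_option synthInstance.maxHeartbeats 1000000
set_option maxHeartbeats 1000000
section UPart

variable {n : ℕ}

lemma so_bracket_coe (x y : so n) :
    ((⁅x, y⁆ : so n) : Matrix (Fin (2*n)) (Fin (2*n)) ℂ) = x.1 * y.1 - y.1 * x.1 := rfl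

lemma ePlus_anti (i j : Fin n) : ePlus j i = - ePlus i j := by
  apply Subtype.ext
  show eP j i = -(eP i j)
  rw [eP_anti]

lemma ePlus_diag (i : Fin n) : ePlus i i = 0 := by
  apply Subtype.ext
  show eP i i = 0
  rw [eP_diag]

lemma ePlus_bracket_ePlus (i j i' j' : Fin n) : ⁅ePlus i j, ePlus i' j'⁆ = (0 : so n) := by
  apply Subtype.ext
  rw [so_bracket_coe]
  show eP i j * eP i' j' - eP i' j' * eP i j = _
  rw [eP_mul_eP, eP_mul_eP, sub_zero]
  rfl

lemma eMinus_bracket_ePlus (k m i j : Fin n) :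
    ⁅eMinus k m, ePlus i j⁆
      = (if m = i then ePlus k j else 0) + (if m = j then ePlus i k else 0) := by
  apply Subtype.ext
  rw [so_bracket_coe]
  show eM k m * eP i j - eP i j * eM k m = _
  rw [eM_bracket_eP]
  congr 1 <;> split <;> rfl

lemma Hcar_bracket_ePlus (a : Fin n → ℂ) (i j : Fin n) :
    ⁅Hcar a, ePlus i j⁆ = (a i + a j) • ePlus i j := by
  apply Subtype.ext
  rw [so_bracket_coe]
  show Hmat a * eP i j - eP i j * Hmat a = _
  rw [Hmat_bracket_eP]; rfl

lemma uι_comm (x y : so n) : uι x * uι y - uι y * uι x = uι ⁅x, y⁆ := by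
  rw [uι, uι, uι, LieHom.map_lie]
  rfl

lemma uι_smul (c : ℂ) (x : so n) : uι (c • x) = c • uι x := by
  rw [uι, uι]; exact map_smul (UniversalEnvelopingAlgebra.ι ℂ).toLinearMap c x

lemma uι_add (x y : so n) : uι (x + y) = uι x + uι y := by
  rw [uι, uι, uι]; exact map_add (UniversalEnvelopingAlgebra.ι ℂ).toLinearMap x y

lemma uι_zero : uι (0 : so n) = 0 :=
  map_zero (UniversalEnvelopingAlgebra.ι ℂ).toLinearMap

lemma uι_neg (x : so n) : uι (-x) = - uι x :=
  map_neg (UniversalEnvelopingAlgebra.ι ℂ).toLinearMap x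

/-- abbreviation for the generators of the commutative subalgebra -/
def Xg {n : ℕ} (i j : Fin n) : Uso n := uι (ePlus i j)

lemma Xg_comm (i j i' j' : Fin n) : Xg i j * Xg i' j' = Xg i' j' * Xg i j := by
  have h := uι_comm (n := n) (ePlus i j) (ePlus i' j')
  rw [ePlus_bracket_ePlus, uι_zero] at h
  rw [sub_eq_zero] at h
  exact h

/-- the (commutative) subalgebra generated by the `e_{ε_i + ε_j}`. -/
def AAs (n : ℕ) : Subalgebra ℂ (Uso n) :=
  Algebra.adjoin ℂ (Set.range fun ij : Fin n × Fin n => Xg ij.1 ij.2)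

/-- type synonym for the commutative subalgebra, carrying a single `CommRing` structure -/
def AAt (n : ℕ) : Type := AAs n

instance AAcomm (n : ℕ) : CommRing (AAt n) :=
  Algebra.adjoinCommRingOfComm ℂ (by
    rintro x ⟨⟨i, j⟩, rfl⟩ y ⟨⟨i', j'⟩, rfl⟩
    exact Xg_comm i j i' j')

instance AAalg (n : ℕ) : Algebra ℂ (AAt n) := inferInstanceAs (Algebra ℂ ↥(AAs n))

/-- the canonical algebra embedding -/
def valA (n : ℕ) : AAt n →ₐ[ℂ] Uso n where
  toFun x := (show ↥(AAs n) from x).val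
  map_one' := rfl
  map_mul' _ _ := rfl
  map_zero' := rfl
  map_add' _ _ := rfl
  commutes' _ := rfl

/-- the generators, as elements of the commutative subalgebra -/
def YA {n : ℕ} (i j : Fin n) : AAt n :=
  (⟨Xg i j, Algebra.subset_adjoin ⟨(i, j), rfl⟩⟩ : ↥(AAs n))

lemma valA_YA {n : ℕ} (i j : Fin n) : valA n (YA i j) = Xg i j := rfl

lemma YA_anti (i j : Fin n) : YA j i = - YA i j := by
  show (⟨Xg j i, _⟩ : ↥(AAs n)) = -(⟨Xg i j, _⟩ : ↥(AAs n))
  apply Subtype.ext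
  show Xg j i = -Xg i j
  rw [Xg, Xg, ePlus_anti, uι_neg]

lemma YA_diag (i : Fin n) : YA i i = 0 := by
  show (⟨Xg i i, _⟩ : ↥(AAs n)) = (0 : ↥(AAs n))
  apply Subtype.ext
  show Xg i i = 0
  rw [Xg, ePlus_diag, uι_zero]

end UPart
section Comb

variable {l : ℕ}

/-- even index in a block -/
def d0 (l : ℕ) (h : Fin l) : Fin (2*l) := ⟨2*(h:ℕ), by have := h.isLt; omega⟩
/-- odd index in a block -/
def d1 (l : ℕ) (h : Fin l) : Fin (2*l) := ⟨2*(h:ℕ)+1, by have := h.isLt; omega⟩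
/-- block of an index -/
def blk {l : ℕ} (x : Fin (2*l)) : Fin l := ⟨(x:ℕ)/2, by have := x.isLt; omega⟩

lemma d0_ne_d1 (h h' : Fin l) : d0 l h ≠ d1 l h' := by
  rw [d0, d1, ne_eq, Fin.mk.injEq]; omega

lemma d0_inj : Function.Injective (d0 l) := by
  intro a b hab; rw [d0, d0, Fin.mk.injEq] at hab; exact Fin.ext (by omega)

lemma d1_inj : Function.Injective (d1 l) := by
  intro a b hab; rw [d1, d1, Fin.mk.injEq] at hab; exact Fin.ext (by omega)

lemma blk_d0 (h : Fin l) : blk (d0 l h) = h :=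
  Fin.ext (by rw [blk, d0]; simp only [Fin.val_mk]; first | omega | (split <;> omega))

lemma blk_d1 (h : Fin l) : blk (d1 l h) = h :=
  Fin.ext (by rw [blk, d1]; simp only [Fin.val_mk]; first | omega | (split <;> omega))

lemma d0_or_d1 (x : Fin (2*l)) : x = d0 l (blk x) ∨ x = d1 l (blk x) := by
  rcases Nat.even_or_odd (x:ℕ) with h | h
  · left; apply Fin.ext; rw [d0, blk]; rcases h with ⟨c, hc⟩; simp only [Fin.val_mk]; first | omega | (split <;> omega)
  · right; apply Fin.ext; rw [d1, blk]; rcases h with ⟨c, hc⟩; simp only [Fin.val_mk]; first | omega | (split <;> omega)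

/-- the standard fixed-point-free involution pairing `2h ↔ 2h+1` -/
def pil (l : ℕ) : Equiv.Perm (Fin (2*l)) where
  toFun x := ⟨if (x:ℕ) % 2 = 0 then (x:ℕ)+1 else (x:ℕ)-1, by have := x.isLt; split <;> omega⟩
  invFun x := ⟨if (x:ℕ) % 2 = 0 then (x:ℕ)+1 else (x:ℕ)-1, by have := x.isLt; split <;> omega⟩
  left_inv x := by apply Fin.ext; have := x.isLt; simp only; split <;> split <;> omega
  right_inv x := by apply Fin.ext; have := x.isLt; simp only; split <;> split <;> omega

lemma pil_d0 (h : Fin l) : pil l (d0 l h) = d1 l h := by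
  apply Fin.ext
  show ((⟨if (2*(h:ℕ)) % 2 = 0 then 2*(h:ℕ)+1 else 2*(h:ℕ)-1, _⟩ : Fin (2*l)) : ℕ) = 2*(h:ℕ)+1
  simp only [Fin.val_mk]; first | omega | (split <;> omega)

lemma pil_d1 (h : Fin l) : pil l (d1 l h) = d0 l h := by
  apply Fin.ext
  show ((⟨if (2*(h:ℕ)+1) % 2 = 0 then 2*(h:ℕ)+1+1 else 2*(h:ℕ)+1-1, _⟩ : Fin (2*l)) : ℕ) = 2*(h:ℕ)
  simp only [Fin.val_mk]; first | omega | (split <;> omega)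

lemma pil_ne (x : Fin (2*l)) : pil l x ≠ x := by
  rw [ne_eq, Fin.ext_iff]
  show (if (x:ℕ) % 2 = 0 then (x:ℕ)+1 else (x:ℕ)-1) = (x:ℕ) → False
  have := x.isLt; split <;> omega

lemma blk_pil (x : Fin (2*l)) : blk (pil l x) = blk x := by
  apply Fin.ext
  show (if (x:ℕ) % 2 = 0 then (x:ℕ)+1 else (x:ℕ)-1) / 2 = (x:ℕ)/2
  have := x.isLt; split <;> omega

lemma pil_mul_pil : pil l * pil l = 1 := by
  apply Equiv.ext
  intro x
  apply Fin.ext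
  show (if (if (x:ℕ) % 2 = 0 then (x:ℕ)+1 else (x:ℕ)-1) % 2 = 0
    then (if (x:ℕ) % 2 = 0 then (x:ℕ)+1 else (x:ℕ)-1)+1
    else (if (x:ℕ) % 2 = 0 then (x:ℕ)+1 else (x:ℕ)-1)-1) = (x:ℕ)
  have := x.isLt; split <;> split <;> omega

/-- membership in `FPFI` -/
lemma mem_FPFI {p : Equiv.Perm (Fin (2*l))} :
    p ∈ FPFI l ↔ p * p = 1 ∧ ∀ i, p i ≠ i := by
  rw [FPFI, Finset.mem_filter]
  simp

lemma FPFI_pp {p : Equiv.Perm (Fin (2*l))} (hp : p ∈ FPFI l) (i : Fin (2*l)) :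
    p (p i) = i := by
  have := (mem_FPFI.mp hp).1
  calc p (p i) = (p * p) i := rfl
  _ = i := by rw [this]; rfl

lemma FPFI_ne {p : Equiv.Perm (Fin (2*l))} (hp : p ∈ FPFI l) (i : Fin (2*l)) :
    p i ≠ i := (mem_FPFI.mp hp).2 i

/-- conjugation of the standard involution -/
def Phi (l : ℕ) (σ : Equiv.Perm (Fin (2*l))) : Equiv.Perm (Fin (2*l)) := σ * pil l * σ⁻¹

lemma Phi_apply (σ : Equiv.Perm (Fin (2*l))) (x : Fin (2*l)) :
    Phi l σ x = σ (pil l (σ⁻¹ x)) := rfl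

lemma Phi_mem (σ : Equiv.Perm (Fin (2*l))) : Phi l σ ∈ FPFI l := by
  rw [mem_FPFI]
  constructor
  · rw [Phi]
    calc σ * pil l * σ⁻¹ * (σ * pil l * σ⁻¹) = σ * (pil l * (σ⁻¹ * σ) * pil l) * σ⁻¹ := by group
    _ = σ * (pil l * pil l) * σ⁻¹ := by rw [inv_mul_cancel, mul_one]
    _ = 1 := by rw [pil_mul_pil, mul_one, mul_inv_cancel]
  · intro i hne
    rw [Phi_apply] at hne
    have h2 : σ (pil l (σ⁻¹ i)) = σ (σ⁻¹ i) := by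
      rw [hne, Equiv.Perm.coe_inv, Equiv.apply_symm_apply]
    exact pil_ne _ (σ.injective h2)

lemma card_LP {p : Equiv.Perm (Fin (2*l))} (hp : p ∈ FPFI l) :
    (Finset.filter (fun i => i < p i) Finset.univ).card = l := by
  classical
  set LP := Finset.filter (fun i => i < p i) (Finset.univ : Finset (Fin (2*l))) with hLP
  set RP := Finset.filter (fun i => p i < i) (Finset.univ : Finset (Fin (2*l))) with hRP
  have himg : LP.image p = RP := by
    ext x
    simp only [Finset.mem_image, Finset.mem_filter, Finset.mem_univ, true_and, hLP, hRP]
    constructor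
    · rintro ⟨i, hi, rfl⟩
      rw [FPFI_pp hp]
      exact hi
    · intro hx
      refine ⟨p x, ?_, FPFI_pp hp x⟩
      rw [FPFI_pp hp]
      exact hx
  have hdisj : Disjoint LP RP := by
    rw [Finset.disjoint_left]
    intro i h1 h2
    rw [hLP, Finset.mem_filter] at h1
    rw [hRP, Finset.mem_filter] at h2
    exact absurd (h1.2.trans h2.2) (lt_irrefl i)
  have hunion : LP ∪ RP = Finset.univ := by
    ext i
    simp only [Finset.mem_union, Finset.mem_filter, Finset.mem_univ, true_and, iff_true, hLP, hRP]
    rcases lt_trichotomy i (p i) with h|h|h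
    · exact Or.inl h
    · exact absurd h.symm (FPFI_ne hp i)
    · exact Or.inr h
  have hcard : LP.card = RP.card := by
    rw [← himg, Finset.card_image_of_injective _ p.injective]
  have hc := Finset.card_union_of_disjoint hdisj
  rw [hunion, Finset.card_univ, Fintype.card_fin] at hc
  omega

lemma length_leftPoints {p : Equiv.Perm (Fin (2*l))} (hp : p ∈ FPFI l) :
    (leftPoints l p).length = l := by
  rw [leftPoints, Finset.length_sort]
  exact card_LP hp

lemma mem_leftPoints {p : Equiv.Perm (Fin (2*l))} {i : Fin (2*l)} :
    i ∈ leftPoints l p ↔ i < p i := by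
  rw [leftPoints, Finset.mem_sort, Finset.mem_filter]
  simp

lemma flatMap_pair_getD {α : Type*} (L : List α) (g : α → α) (j : ℕ) (d : α) :
    (L.flatMap fun i => [i, g i]).getD j d
      = if j % 2 = 0 then L.getD (j/2) d else (L.map g).getD (j/2) d := by
  induction L generalizing j with
  | nil => simp [List.getD]
  | cons a L ih =>
    match j with
    | 0 => simp
    | 1 => simp
    | (j+2) =>
      have h2 : (j+2) % 2 = j % 2 := by omega
      have h3 : (j+2) / 2 = j/2 + 1 := by omega
      rw [h2, h3]
      show (a :: g a :: L.flatMap fun i => [i, g i]).getD (j+2) d = _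
      rw [List.getD_cons_succ, List.getD_cons_succ, ih j]
      rw [List.map_cons, List.getD_cons_succ, List.getD_cons_succ]

lemma length_pairList {p : Equiv.Perm (Fin (2*l))} (hp : p ∈ FPFI l) :
    (pairList l p).length = 2*l := by
  rw [pairList]
  have : ∀ (L : List (Fin (2*l))), (L.flatMap fun i => [i, p i]).length = 2 * L.length := by
    intro L
    induction L with
    | nil => simp
    | cons a L ih => simp only [List.flatMap_cons, List.length_append, ih]; simp; omega
  rw [this, length_leftPoints hp]

lemma pbarFun_d0 {p : Equiv.Perm (Fin (2*l))} (hp : p ∈ FPFI l) (h : Fin l) :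
    pbarFun l p (d0 l h) = (leftPoints l p)[(h:ℕ)]'(by rw [length_leftPoints hp]; exact h.isLt) := by
  rw [pbarFun, pairList, d0]
  show (List.flatMap _ _).getD (2*(h:ℕ)) _ = _
  rw [flatMap_pair_getD]
  have he : (2*(h:ℕ)) % 2 = 0 := by omega
  have hd : (2*(h:ℕ))/2 = (h:ℕ) := by omega
  rw [if_pos he, hd, List.getD_eq_getElem]

lemma pbarFun_d1 {p : Equiv.Perm (Fin (2*l))} (hp : p ∈ FPFI l) (h : Fin l) :
    pbarFun l p (d1 l h)
      = p ((leftPoints l p)[(h:ℕ)]'(by rw [length_leftPoints hp]; exact h.isLt)) := by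
  rw [pbarFun, pairList, d1]
  show (List.flatMap _ _).getD (2*(h:ℕ)+1) _ = _
  rw [flatMap_pair_getD]
  have he : (2*(h:ℕ)+1) % 2 ≠ 0 := by omega
  have hd : (2*(h:ℕ)+1)/2 = (h:ℕ) := by omega
  rw [if_neg he, hd, List.getD_eq_getElem _ _
    (show (h:ℕ) < (List.map (⇑p) (leftPoints l p)).length by
      rw [List.length_map, length_leftPoints hp]; exact h.isLt)]
  rw [List.getElem_map]

lemma pbarFun_bij {p : Equiv.Perm (Fin (2*l))} (hp : p ∈ FPFI l) :
    Function.Bijective (pbarFun l p) := by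
  rw [← Finite.surjective_iff_bijective]
  intro x
  have hmem : x ∈ pairList l p := by
    rw [pairList, List.mem_flatMap]
    rcases lt_trichotomy x (p x) with h|h|h
    · exact ⟨x, mem_leftPoints.mpr h, by simp⟩
    · exact absurd h.symm (FPFI_ne hp x)
    · refine ⟨p x, mem_leftPoints.mpr ?_, ?_⟩
      · rw [FPFI_pp hp]; exact h
      · rw [FPFI_pp hp]; simp
  obtain ⟨j, hj, hval⟩ := List.mem_iff_getElem.mp hmem
  rw [length_pairList hp] at hj
  refine ⟨⟨j, hj⟩, ?_⟩
  rw [pbarFun]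
  show (pairList l p).getD j _ = x
  rw [List.getD_eq_getElem _ _ (by rw [length_pairList hp]; exact hj)]
  exact hval

lemma pbar_apply {p : Equiv.Perm (Fin (2*l))} (hp : p ∈ FPFI l) (k : Fin (2*l)) :
    pbar l p k = pbarFun l p k := by
  rw [pbar, dif_pos (pbarFun_bij hp)]
  rfl

lemma pbar_pil {p : Equiv.Perm (Fin (2*l))} (hp : p ∈ FPFI l) (k : Fin (2*l)) :
    pbar l p (pil l k) = p (pbar l p k) := by
  rcases d0_or_d1 k with hk | hk
  · rw [hk, pil_d0, pbar_apply hp, pbar_apply hp, pbarFun_d0 hp, pbarFun_d1 hp]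
  · rw [hk, pil_d1, pbar_apply hp, pbar_apply hp, pbarFun_d0 hp, pbarFun_d1 hp, FPFI_pp hp]

lemma Phi_pbar {p : Equiv.Perm (Fin (2*l))} (hp : p ∈ FPFI l) : Phi l (pbar l p) = p := by
  have key : pbar l p * pil l = p * pbar l p := by
    apply Equiv.ext
    intro k
    rw [Equiv.Perm.mul_apply, Equiv.Perm.mul_apply, pbar_pil hp]
  rw [Phi, key, mul_assoc, mul_inv_cancel, mul_one]

end Comb
section SignPart

variable {l : ℕ}

/-- The identification `Fin l × Bool ≃ Fin (2l)` by blocks. -/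
def eFB (l : ℕ) : Fin l × Bool ≃ Fin (2*l) where
  toFun hs := if hs.2 then d1 l hs.1 else d0 l hs.1
  invFun x := (blk x, decide ((x:ℕ) % 2 = 1))
  left_inv := by
    rintro ⟨h, s⟩
    cases s
    · simp only [if_false, Bool.false_eq_true]
      refine Prod.ext (blk_d0 h) ?_
      rw [d0]
      simp only [Fin.val_mk]
      rw [decide_eq_false_iff_not]
      omega
    · simp only [if_true]
      refine Prod.ext (blk_d1 h) ?_
      rw [d1]
      simp only [Fin.val_mk]
      rw [decide_eq_true_eq]
      omega
  right_inv := by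
    intro x
    rcases d0_or_d1 x with hx | hx
    · have hd : decide ((x:ℕ) % 2 = 1) = false := by
        rw [decide_eq_false_iff_not, hx, d0]
        simp only [Fin.val_mk]
        omega
      show (if decide ((x:ℕ) % 2 = 1) = true then d1 l (blk x) else d0 l (blk x)) = x
      rw [hd]
      simp only [Bool.false_eq_true, if_false]
      exact hx.symm
    · have hd : decide ((x:ℕ) % 2 = 1) = true := by
        rw [decide_eq_true_eq, hx, d1]
        simp only [Fin.val_mk]
        omega
      show (if decide ((x:ℕ) % 2 = 1) = true then d1 l (blk x) else d0 l (blk x)) = x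
      rw [hd]
      simp only [if_true]
      exact hx.symm

lemma eFB_false (h : Fin l) : eFB l (h, false) = d0 l h := rfl
lemma eFB_true (h : Fin l) : eFB l (h, true) = d1 l h := rfl

lemma eFB_symm_d0 (h : Fin l) : (eFB l).symm (d0 l h) = (h, false) := by
  rw [← eFB_false h, Equiv.symm_apply_apply]

lemma eFB_symm_d1 (h : Fin l) : (eFB l).symm (d1 l h) = (h, true) := by
  rw [← eFB_true h, Equiv.symm_apply_apply]

/-- sign-flip permutation on a set of blocks -/
def flipPerm {l : ℕ} (F : Finset (Fin l)) : Equiv.Perm (Fin l × Bool) where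
  toFun hs := (hs.1, xor (decide (hs.1 ∈ F)) hs.2)
  invFun hs := (hs.1, xor (decide (hs.1 ∈ F)) hs.2)
  left_inv := by rintro ⟨h, s⟩; cases hd : decide (h ∈ F) <;> simp [hd]
  right_inv := by rintro ⟨h, s⟩; cases hd : decide (h ∈ F) <;> simp [hd]

lemma flipPerm_apply (F : Finset (Fin l)) (h : Fin l) (s : Bool) :
    flipPerm F (h, s) = (h, xor (decide (h ∈ F)) s) := rfl

lemma flipPerm_empty : flipPerm (∅ : Finset (Fin l)) = 1 := by
  apply Equiv.ext
  rintro ⟨h, s⟩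
  rw [flipPerm_apply]
  simp

lemma flipPerm_insert (a : Fin l) (F : Finset (Fin l)) (ha : a ∉ F) :
    flipPerm (insert a F)
      = Equiv.Perm.prodExtendRight a (Equiv.swap false true) * flipPerm F := by
  apply Equiv.ext
  rintro ⟨h, s⟩
  rw [Equiv.Perm.mul_apply, flipPerm_apply, flipPerm_apply]
  by_cases hha : h = a
  · subst hha
    have h1 : decide (h ∈ insert h F) = true := by simp
    have h2 : decide (h ∈ F) = false := by simp [ha]
    rw [h1, h2, Equiv.Perm.prodExtendRight_apply_eq]
    cases s <;> rfl
  · have h1 : decide (h ∈ insert a F) = decide (h ∈ F) := by simp [hha]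
    rw [h1, Equiv.Perm.prodExtendRight_apply_ne _ hha]

lemma sign_flipPerm (F : Finset (Fin l)) :
    Equiv.Perm.sign (flipPerm F) = (-1)^F.card := by
  classical
  induction F using Finset.induction_on with
  | empty => rw [flipPerm_empty]; simp
  | @insert a F ha ih =>
    rw [flipPerm_insert a F ha, _root_.map_mul, ih, Equiv.Perm.sign_prodExtendRight,
      Equiv.Perm.sign_swap (by simp), Finset.card_insert_of_notMem ha, pow_succ]
    exact mul_comm _ _

/-- permutation of blocks -/
def pcP {l : ℕ} (τ : Equiv.Perm (Fin l)) : Equiv.Perm (Fin l × Bool) :=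
  Equiv.prodCongr τ (Equiv.refl Bool)

lemma pcP_apply (τ : Equiv.Perm (Fin l)) (h : Fin l) (s : Bool) :
    pcP τ (h, s) = (τ h, s) := rfl

lemma pcP_mul (τ υ : Equiv.Perm (Fin l)) : pcP (τ * υ) = pcP τ * pcP υ := by
  apply Equiv.ext; rintro ⟨h, s⟩; rfl

lemma pcP_swap (x y : Fin l) (hxy : x ≠ y) :
    pcP (Equiv.swap x y)
      = Equiv.swap (x, false) (y, false) * Equiv.swap (x, true) (y, true) := by
  apply Equiv.ext
  rintro ⟨h, s⟩
  rw [Equiv.Perm.mul_apply, pcP_apply]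
  cases s <;>
    simp only [Equiv.swap_apply_def, Prod.mk.injEq, Prod.ext_iff] <;>
    split_ifs <;> simp_all

lemma sign_pcP (τ : Equiv.Perm (Fin l)) : Equiv.Perm.sign (pcP τ) = 1 := by
  refine Equiv.Perm.swap_induction_on τ ?_ ?_
  · have h1 : pcP (1 : Equiv.Perm (Fin l)) = 1 := by apply Equiv.ext; rintro ⟨h, s⟩; rfl
    rw [h1, _root_.map_one]
  · intro f x y hxy ih
    rw [pcP_mul, _root_.map_mul, ih, pcP_swap x y hxy, _root_.map_mul,
      Equiv.Perm.sign_swap (by simp [hxy]), Equiv.Perm.sign_swap (by simp [hxy])]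
    decide

section Centralizer

variable {b : Equiv.Perm (Fin (2*l))}

/-- block permutation induced by a centralizing permutation -/
def tau (b : Equiv.Perm (Fin (2*l))) (h : Fin l) : Fin l := blk (b (d0 l h))

/-- flip indicator induced by a centralizing permutation -/
def phb (b : Equiv.Perm (Fin (2*l))) (h : Fin l) : Bool :=
  decide (((b (d0 l h)):ℕ) % 2 = 1)

lemma cent_d1 (hb : b * pil l = pil l * b) (h : Fin l) :
    b (d1 l h) = pil l (b (d0 l h)) := by
  have := congrArg (fun q : Equiv.Perm (Fin (2*l)) => q (d0 l h)) hb
  simp only [Equiv.Perm.mul_apply] at this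
  rw [pil_d0] at this
  exact this

lemma b_d0 (h : Fin l) :
    b (d0 l h) = if phb b h then d1 l (tau b h) else d0 l (tau b h) := by
  rcases d0_or_d1 (b (d0 l h)) with hx | hx
  · have hph : phb b h = false := by
      rw [phb, decide_eq_false_iff_not, hx, d0]
      simp only [Fin.val_mk]
      omega
    rw [hph, if_neg (by simp)]
    exact hx
  · have hph : phb b h = true := by
      rw [phb, decide_eq_true_eq, hx, d1]
      simp only [Fin.val_mk]
      omega
    rw [hph, if_pos rfl]
    exact hx

lemma b_d1 (hb : b * pil l = pil l * b) (h : Fin l) :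
    b (d1 l h) = if phb b h then d0 l (tau b h) else d1 l (tau b h) := by
  rw [cent_d1 hb, b_d0 (b := b) h]
  cases hph : phb b h
  · simp only [Bool.false_eq_true, if_false]
    exact pil_d0 _
  · simp only [if_true]
    exact pil_d1 _

lemma tau_inj (hb : b * pil l = pil l * b) : Function.Injective (tau b) := by
  intro h h' he
  cases hph : phb b h <;> cases hph' : phb b h'
  · have e0 : b (d0 l h) = d0 l (tau b h) := by rw [b_d0 (b := b) h, hph]; simp
    have e0' : b (d0 l h') = d0 l (tau b h) := by rw [b_d0 (b := b) h', hph', he]; simp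
    exact d0_inj (b.injective (e0.trans e0'.symm))
  · have e0 : b (d0 l h) = d0 l (tau b h) := by rw [b_d0 (b := b) h, hph]; simp
    have e1' : b (d1 l h') = d0 l (tau b h) := by rw [b_d1 hb h', hph', he]; simp
    exact absurd (b.injective (e0.trans e1'.symm)) (d0_ne_d1 h h')
  · have e0 : b (d0 l h) = d1 l (tau b h) := by rw [b_d0 (b := b) h, hph]; simp
    have e1' : b (d1 l h') = d1 l (tau b h) := by rw [b_d1 hb h', hph', he]; simp
    exact absurd (b.injective (e0.trans e1'.symm)) (d0_ne_d1 h h')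
  · have e0 : b (d0 l h) = d1 l (tau b h) := by rw [b_d0 (b := b) h, hph]; simp
    have e0' : b (d0 l h') = d1 l (tau b h) := by rw [b_d0 (b := b) h', hph', he]; simp
    exact d0_inj (b.injective (e0.trans e0'.symm))

/-- the induced block permutation as an `Equiv` -/
noncomputable def tauE (hb : b * pil l = pil l * b) : Equiv.Perm (Fin l) :=
  Equiv.ofBijective (tau b) (Finite.injective_iff_bijective.mp (tau_inj hb))

lemma tauE_apply (hb : b * pil l = pil l * b) (h : Fin l) : tauE hb h = tau b h := rfl

/-- flip set of a centralizing permutation -/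
def Fb (b : Equiv.Perm (Fin (2*l))) : Finset (Fin l) :=
  Finset.univ.filter fun h => phb b h = true

lemma decide_mem_Fb (h : Fin l) : decide (h ∈ Fb b) = phb b h := by
  cases hph : phb b h
  · rw [decide_eq_false_iff_not, Fb, Finset.mem_filter]
    simp [hph]
  · rw [decide_eq_true_eq, Fb, Finset.mem_filter]
    simp [hph]

lemma b_decomp (hb : b * pil l = pil l * b) :
    (eFB l).permCongr (pcP (tauE hb) * flipPerm (Fb b)) = b := by
  apply Equiv.ext
  intro x
  rw [Equiv.permCongr_apply, Equiv.Perm.mul_apply]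
  rcases d0_or_d1 x with hx | hx
  · rw [hx, eFB_symm_d0, flipPerm_apply, decide_mem_Fb, Bool.xor_false, pcP_apply, tauE_apply,
      b_d0 (b := b)]
    cases hph : phb b (blk x) <;>
      simp only [hph, eFB_false, eFB_true, if_true, Bool.false_eq_true, if_false]
  · rw [hx, eFB_symm_d1, flipPerm_apply, decide_mem_Fb, Bool.xor_true, pcP_apply, tauE_apply,
      b_d1 hb]
    cases hph : phb b (blk x) <;>
      simp only [hph, Bool.not_false, Bool.not_true, eFB_false, eFB_true, if_true,
        Bool.false_eq_true, if_false]

lemma sign_cent (hb : b * pil l = pil l * b) :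
    Equiv.Perm.sign b = (-1)^(Fb b).card := by
  have hs := congrArg Equiv.Perm.sign (b_decomp hb)
  rw [Equiv.Perm.sign_permCongr, _root_.map_mul, sign_pcP, sign_flipPerm, one_mul] at hs
  exact hs.symm

end Centralizer

end SignPart
section AlgPart

variable {l : ℕ}

/-- the product of generators along blocks, for an index-assignment `g` -/
def WP (l : ℕ) (g : Fin (2*l) → Fin (2*l)) : AAt (2*l) :=
  ∏ h : Fin l, YA (g (d0 l h)) (g (d1 l h))

/-- sign as a complex number -/
def sgnC {l : ℕ} (σ : Equiv.Perm (Fin (2*l))) : ℂ :=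
  ((Equiv.Perm.sign σ : ℤ) : ℂ)

lemma sgnC_mul (σ τ : Equiv.Perm (Fin (2*l))) : sgnC (σ * τ) = sgnC σ * sgnC τ := by
  rw [sgnC, sgnC, sgnC, _root_.map_mul]
  push_cast
  ring

lemma TT_cent (σ b : Equiv.Perm (Fin (2*l))) (hb : b * pil l = pil l * b) :
    sgnC (σ * b) • WP l ⇑(σ * b) = sgnC σ • WP l ⇑σ := by
  have hfac : ∀ h : Fin l,
      YA ((σ * b) (d0 l h)) ((σ * b) (d1 l h))
        = algebraMap ℂ (AAt (2*l)) (if phb b h then -1 else 1)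
            * YA (σ (d0 l (tauE hb h))) (σ (d1 l (tauE hb h))) := by
    intro h
    have e0 := b_d0 (b := b) h
    have e1 := b_d1 hb h
    rw [Equiv.Perm.mul_apply, Equiv.Perm.mul_apply, e0, e1, tauE_apply]
    cases hph : phb b h
    · simp only [Bool.false_eq_true, if_false]
      rw [_root_.map_one, one_mul]
    · simp only [if_true]
      rw [YA_anti, _root_.map_neg, _root_.map_one, neg_one_mul]
  have hWP : WP l ⇑(σ * b)
      = algebraMap ℂ (AAt (2*l)) ((-1)^(Fb b).card) * WP l ⇑σ := by
    rw [WP, Finset.prod_congr rfl fun h _ => hfac h, Finset.prod_mul_distrib,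
      ← _root_.map_prod]
    congr 1
    · congr 1
      rw [← Finset.prod_filter_mul_prod_filter_not Finset.univ (fun h => phb b h = true)]
      have h1 : ∀ h ∈ Finset.filter (fun h => phb b h = true) Finset.univ,
          (if phb b h then (-1:ℂ) else 1) = -1 := by
        intro h hh
        rw [Finset.mem_filter] at hh
        rw [if_pos hh.2]
      have h2 : ∀ h ∈ Finset.filter (fun h => ¬phb b h = true) Finset.univ,
          (if phb b h then (-1:ℂ) else 1) = 1 := by
        intro h hh
        rw [Finset.mem_filter] at hh
        rw [if_neg hh.2]
      rw [Finset.prod_congr rfl h1, Finset.prod_congr rfl h2, Finset.prod_const,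
        Finset.prod_const, one_pow, mul_one]
      rfl
    · exact Equiv.prod_comp (tauE hb) (fun h => YA (σ (d0 l h)) (σ (d1 l h)))
  rw [hWP, sgnC_mul, ← Algebra.smul_def, smul_smul]
  have hsb : sgnC b = ((-1:ℂ))^(Fb b).card := by
    rw [sgnC, sign_cent hb]
    push_cast
    ring
  rw [hsb, mul_assoc, ← pow_add]
  have : ((-1:ℂ))^((Fb b).card + (Fb b).card) = 1 := Even.neg_one_pow ⟨(Fb b).card, rfl⟩
  rw [this, mul_one]

/-- the centralizer of the standard involution, as a finset -/
def Cset (l : ℕ) : Finset (Equiv.Perm (Fin (2*l))) :=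
  Finset.univ.filter fun b => b * pil l = pil l * b

lemma one_mem_Cset : (1 : Equiv.Perm (Fin (2*l))) ∈ Cset l := by
  rw [Cset, Finset.mem_filter]
  exact ⟨Finset.mem_univ _, by rw [one_mul, mul_one]⟩

lemma Cset_card_pos : 0 < (Cset l).card :=
  Finset.card_pos.mpr ⟨1, one_mem_Cset⟩

lemma fiber_eq (p : Equiv.Perm (Fin (2*l))) (hp : p ∈ FPFI l) :
    Finset.filter (fun σ => Phi l σ = p) Finset.univ
      = (Cset l).image (fun b => pbar l p * b) := by
  ext σ
  rw [Finset.mem_filter, Finset.mem_image]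
  constructor
  · rintro ⟨-, hσ⟩
    refine ⟨(pbar l p)⁻¹ * σ, ?_, by group⟩
    rw [Cset, Finset.mem_filter]
    refine ⟨Finset.mem_univ _, ?_⟩
    have h1 : σ * pil l * σ⁻¹ = pbar l p * pil l * (pbar l p)⁻¹ := by
      show Phi l σ = Phi l (pbar l p)
      rw [hσ, Phi_pbar hp]
    have h2 : ((pbar l p)⁻¹ * σ) * pil l * ((pbar l p)⁻¹ * σ)⁻¹ = pil l := by
      rw [_root_.mul_inv_rev]
      calc (pbar l p)⁻¹ * σ * pil l * (σ⁻¹ * (pbar l p)⁻¹⁻¹)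
          = (pbar l p)⁻¹ * (σ * pil l * σ⁻¹) * pbar l p := by group
        _ = (pbar l p)⁻¹ * (pbar l p * pil l * (pbar l p)⁻¹) * pbar l p := by rw [h1]
        _ = pil l := by group
    calc (pbar l p)⁻¹ * σ * pil l
        = ((pbar l p)⁻¹ * σ * pil l * ((pbar l p)⁻¹ * σ)⁻¹) * ((pbar l p)⁻¹ * σ) := by group
      _ = pil l * ((pbar l p)⁻¹ * σ) := by rw [h2]
  · rintro ⟨b, hb, rfl⟩
    rw [Cset, Finset.mem_filter] at hb
    refine ⟨Finset.mem_univ _, ?_⟩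
    have hbπ : b * pil l * b⁻¹ = pil l := by
      rw [hb.2]
      group
    show pbar l p * b * pil l * (pbar l p * b)⁻¹ = p
    calc pbar l p * b * pil l * (pbar l p * b)⁻¹
        = pbar l p * (b * pil l * b⁻¹) * (pbar l p)⁻¹ := by group
      _ = pbar l p * pil l * (pbar l p)⁻¹ := by rw [hbπ]
      _ = p := Phi_pbar hp

end AlgPart
section AlgPart2

variable {l : ℕ}

/-- `Ω` as an element of the commutative subalgebra -/
def OmA (l : ℕ) : AAt (2*l) :=
  ∑ p ∈ FPFI l, sgn l p • WP l ⇑(pbar l p)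

/-- the big symmetrized sum -/
def ZA (l : ℕ) : AAt (2*l) :=
  ∑ σ : Equiv.Perm (Fin (2*l)), sgnC σ • WP l ⇑σ

lemma sgnC_pbar (p : Equiv.Perm (Fin (2*l))) : sgnC (pbar l p) = sgn l p := rfl

lemma ZA_eq : ZA l = ((Cset l).card : ℂ) • OmA l := by
  rw [ZA, ← Finset.sum_fiberwise_of_maps_to (fun σ _ => Phi_mem σ)
    (fun σ => sgnC σ • WP l ⇑σ)]
  rw [OmA, Finset.smul_sum]
  refine Finset.sum_congr rfl fun p hp => ?_
  rw [fiber_eq p hp, Finset.sum_image (fun b _ b' _ h => by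
    exact mul_left_cancel h)]
  have hconst : ∀ b ∈ Cset l, sgnC (pbar l p * b) • WP l ⇑(pbar l p * b)
      = sgn l p • WP l ⇑(pbar l p) := by
    intro b hb
    rw [Cset, Finset.mem_filter] at hb
    rw [TT_cent _ _ hb.2, sgnC_pbar]
  rw [Finset.sum_congr rfl hconst, Finset.sum_const, ← Nat.cast_smul_eq_nsmul ℂ, smul_smul]

/-- the list-product form of `WP` along `pbar` -/
lemma val_WP_pbar {p : Equiv.Perm (Fin (2*l))} (hp : p ∈ FPFI l) :
    valA (2*l) (WP l ⇑(pbar l p))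
      = ((leftPoints l p).map fun i => uι (ePlus i (p i))).prod := by
  rw [WP]
  have h1 : (∏ h : Fin l, YA (pbar l p (d0 l h)) (pbar l p (d1 l h)))
      = (List.ofFn fun h : Fin l => YA (pbar l p (d0 l h)) (pbar l p (d1 l h))).prod := by
    rw [List.prod_ofFn]
  rw [h1, map_list_prod, List.map_ofFn]
  congr 1
  apply List.ext_getElem
  · rw [List.length_ofFn, List.length_map, length_leftPoints hp]
  · intro k hk1 hk2
    rw [List.length_ofFn] at hk1
    rw [List.getElem_ofFn, List.getElem_map]
    show valA (2*l) (YA _ _) = _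
    rw [valA_YA, Xg]
    have e0 : pbar l p (d0 l ⟨k, hk1⟩)
        = (leftPoints l p)[k]'(by rw [length_leftPoints hp]; exact hk1) := by
      rw [pbar_apply hp, pbarFun_d0 hp ⟨k, hk1⟩]
    have e1 : pbar l p (d1 l ⟨k, hk1⟩)
        = p ((leftPoints l p)[k]'(by rw [length_leftPoints hp]; exact hk1)) := by
      rw [pbar_apply hp, pbarFun_d1 hp ⟨k, hk1⟩]
    rw [e0, e1]

lemma val_OmA : valA (2*l) (OmA l) = Omega l := by
  rw [OmA, map_sum, Omega]
  refine Finset.sum_congr rfl fun p hp => ?_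
  rw [_root_.map_smul, val_WP_pbar hp]

/-- alternating property of the symmetrized sum -/
lemma alt_sum (f : Fin (2*l) → Fin (2*l)) (a b : Fin (2*l)) (hab : a ≠ b)
    (hf : f a = f b) :
    ∑ σ : Equiv.Perm (Fin (2*l)), sgnC σ • WP l (f ∘ ⇑σ) = 0 := by
  have hfw : ∀ y, f (Equiv.swap a b y) = f y := by
    intro y
    rcases eq_or_ne y a with rfl | hya
    · rw [Equiv.swap_apply_left, hf]
    rcases eq_or_ne y b with rfl | hyb
    · rw [Equiv.swap_apply_right, hf]
    rw [Equiv.swap_apply_of_ne_of_ne hya hyb]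
  have key : (∑ σ : Equiv.Perm (Fin (2*l)), sgnC σ • WP l (f ∘ ⇑σ))
      = -(∑ σ : Equiv.Perm (Fin (2*l)), sgnC σ • WP l (f ∘ ⇑σ)) := by
    calc (∑ σ : Equiv.Perm (Fin (2*l)), sgnC σ • WP l (f ∘ ⇑σ))
        = ∑ σ : Equiv.Perm (Fin (2*l)),
            sgnC (Equiv.swap a b * σ) • WP l (f ∘ ⇑(Equiv.swap a b * σ)) :=
          (Equiv.sum_comp (Equiv.mulLeft (Equiv.swap a b))
            (fun τ => sgnC τ • WP l (f ∘ ⇑τ))).symm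
      _ = ∑ σ : Equiv.Perm (Fin (2*l)), -(sgnC σ • WP l (f ∘ ⇑σ)) := by
          refine Finset.sum_congr rfl fun σ _ => ?_
          have hsg : sgnC (Equiv.swap a b * σ) = -sgnC σ := by
            rw [sgnC_mul, sgnC, Equiv.Perm.sign_swap hab]
            push_cast
            ring
          have hwp : WP l (f ∘ ⇑(Equiv.swap a b * σ)) = WP l (f ∘ ⇑σ) := by
            congr 1
            funext x
            show f (Equiv.swap a b (σ x)) = f (σ x)
            exact hfw (σ x)
          rw [hsg, hwp, neg_smul]
      _ = -(∑ σ : Equiv.Perm (Fin (2*l)), sgnC σ • WP l (f ∘ ⇑σ)) := by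
          exact Finset.sum_neg_distrib ..
  have h2 : (2:ℂ) • (∑ σ : Equiv.Perm (Fin (2*l)), sgnC σ • WP l (f ∘ ⇑σ)) = 0 := by
    rw [two_smul]
    nth_rewrite 2 [key]
    rw [add_neg_cancel]
  rcases smul_eq_zero.mp h2 with h | h
  · exact absurd h two_ne_zero
  · exact h

end AlgPart2
section Deriv

variable {l : ℕ}

lemma D_mul_id (E u v : Uso (2*l)) :
    E * (u * v) - (u * v) * E = (E*u - u*E) * v + u * (E*v - v*E) := by noncomm_ring

lemma D_prod (E : Uso (2*l)) (y dy : Fin l → AAt (2*l))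
    (hdy : ∀ h, E * (valA (2*l) (y h)) - (valA (2*l) (y h)) * E = valA (2*l) (dy h))
    (s : Finset (Fin l)) :
    E * valA (2*l) (∏ h ∈ s, y h) - valA (2*l) (∏ h ∈ s, y h) * E
      = valA (2*l) (∑ h ∈ s, (∏ h' ∈ s.erase h, y h') * dy h) := by
  classical
  induction s using Finset.induction_on with
  | empty =>
      rw [Finset.prod_empty, Finset.sum_empty, _root_.map_one, _root_.map_zero, mul_one,
        one_mul, sub_self]
  | @insert a s ha ih =>
    rw [Finset.prod_insert ha, _root_.map_mul, D_mul_id, ih, hdy a, ← _root_.map_mul,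
      ← _root_.map_mul, ← map_add]
    congr 1
    rw [Finset.sum_insert ha, Finset.erase_insert ha]
    erw [Finset.mul_sum]
    have hterm : ∀ h ∈ s, y a * ((∏ h' ∈ s.erase h, y h') * dy h)
        = (∏ h' ∈ (insert a s).erase h, y h') * dy h := by
      intro h hh
      have hne : a ≠ h := fun e => ha (e ▸ hh)
      rw [Finset.erase_insert_of_ne hne,
        Finset.prod_insert (fun hmem => ha (Finset.mem_of_mem_erase hmem)), mul_assoc]
    erw [Finset.sum_congr rfl hterm]
    congr 1
    exact mul_comm _ _

/-- the substituted derivative generator for the `eMinus` bracket -/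
def dYA (k' m i j : Fin (2*l)) : AAt (2*l) :=
  (if m = i then YA k' j else 0) + (if m = j then YA i k' else 0)

lemma val_dYA (k' m i j : Fin (2*l)) :
    valA (2*l) (dYA k' m i j)
      = (if m = i then Xg k' j else 0) + (if m = j then Xg i k' else 0) := by
  rw [dYA, map_add, apply_ite (valA (2*l)), apply_ite (valA (2*l)), _root_.map_zero,
    valA_YA, valA_YA]

lemma D_Xg (k' m i j : Fin (2*l)) :
    uι (eMinus k' m) * Xg i j - Xg i j * uι (eMinus k' m)
      = valA (2*l) (dYA k' m i j) := by
  rw [Xg, uι_comm, eMinus_bracket_ePlus, uι_add, apply_ite uι, apply_ite uι, uι_zero,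
    val_dYA]
  rfl

lemma D_WP (k' m : Fin (2*l)) (σ : Equiv.Perm (Fin (2*l))) :
    uι (eMinus k' m) * valA (2*l) (WP l ⇑σ) - valA (2*l) (WP l ⇑σ) * uι (eMinus k' m)
      = valA (2*l) (WP l (Function.update id m k' ∘ ⇑σ)) := by
  rw [WP, D_prod (uι (eMinus k' m)) _ (fun h => dYA k' m (σ (d0 l h)) (σ (d1 l h)))
    (fun h => D_Xg k' m _ _) Finset.univ]
  congr 1
  have hL : (∑ h : Fin l,
      (∏ h' ∈ Finset.univ.erase h, YA (σ (d0 l h')) (σ (d1 l h')))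
        * dYA k' m (σ (d0 l h)) (σ (d1 l h)))
      = (∏ h' ∈ Finset.univ.erase (blk (σ⁻¹ m)), YA (σ (d0 l h')) (σ (d1 l h')))
        * dYA k' m (σ (d0 l (blk (σ⁻¹ m)))) (σ (d1 l (blk (σ⁻¹ m)))) := by
    refine Finset.sum_eq_single (blk (σ⁻¹ m)) ?_ ?_
    · intro h _ hne
      have h1 : m ≠ σ (d0 l h) := by
        intro e
        have : σ⁻¹ m = d0 l h := by rw [e, Equiv.Perm.coe_inv, Equiv.symm_apply_apply]
        exact hne (by rw [this, blk_d0])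
      have h2 : m ≠ σ (d1 l h) := by
        intro e
        have : σ⁻¹ m = d1 l h := by rw [e, Equiv.Perm.coe_inv, Equiv.symm_apply_apply]
        exact hne (by rw [this, blk_d1])
      rw [dYA, if_neg h1, if_neg h2, add_zero, mul_zero]
    · intro hmem
      exact absurd (Finset.mem_univ _) hmem
  rw [hL]
  set h0 := blk (σ⁻¹ m) with hh0
  have hprod : (∏ h' ∈ Finset.univ.erase h0, YA (σ (d0 l h')) (σ (d1 l h')))
      = ∏ h' ∈ Finset.univ.erase h0,
          YA (Function.update id m k' (σ (d0 l h'))) (Function.update id m k' (σ (d1 l h'))) := by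
    refine Finset.prod_congr rfl fun h hh => ?_
    have hne : h ≠ h0 := (Finset.mem_erase.mp hh).1
    have h1 : σ (d0 l h) ≠ m := by
      intro e
      have : σ⁻¹ m = d0 l h := by rw [← e, Equiv.Perm.coe_inv, Equiv.symm_apply_apply]
      exact hne (by rw [hh0, this, blk_d0])
    have h2 : σ (d1 l h) ≠ m := by
      intro e
      have : σ⁻¹ m = d1 l h := by rw [← e, Equiv.Perm.coe_inv, Equiv.symm_apply_apply]
      exact hne (by rw [hh0, this, blk_d1])
    rw [Function.update_of_ne h1, Function.update_of_ne h2]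
    rfl
  have hfac : dYA k' m (σ (d0 l h0)) (σ (d1 l h0))
      = YA (Function.update id m k' (σ (d0 l h0))) (Function.update id m k' (σ (d1 l h0))) := by
    rcases d0_or_d1 (σ⁻¹ m) with ht | ht
    · have hs0 : σ (d0 l h0) = m := by
        rw [hh0, ← ht, Equiv.Perm.coe_inv, Equiv.apply_symm_apply]
      have hs1 : σ (d1 l h0) ≠ m := by
        intro e
        have h1 : σ⁻¹ m = d1 l h0 := by rw [← e, Equiv.Perm.coe_inv, Equiv.symm_apply_apply]
        rw [hh0] at h1
        exact d0_ne_d1 (blk (σ⁻¹ m)) (blk (σ⁻¹ m)) (ht.symm.trans h1)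
      rw [dYA, if_pos hs0.symm, if_neg (fun e => hs1 e.symm), add_zero, hs0,
        Function.update_self, Function.update_of_ne hs1]
      rfl
    · have hs1 : σ (d1 l h0) = m := by
        rw [hh0, ← ht, Equiv.Perm.coe_inv, Equiv.apply_symm_apply]
      have hs0 : σ (d0 l h0) ≠ m := by
        intro e
        have h1 : σ⁻¹ m = d0 l h0 := by rw [← e, Equiv.Perm.coe_inv, Equiv.symm_apply_apply]
        rw [hh0] at h1
        exact d0_ne_d1 (blk (σ⁻¹ m)) (blk (σ⁻¹ m)) (h1.symm.trans ht)
      rw [dYA, if_neg (fun e => hs0 e.symm), if_pos hs1.symm, zero_add, hs1,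
        Function.update_self, Function.update_of_ne hs0]
      rfl
  rw [hprod, hfac, WP]
  exact Finset.prod_erase_mul _ _ (Finset.mem_univ h0)

end Deriv
section HPart

variable {l : ℕ}

lemma D_Xg_H (a : Fin (2*l) → ℂ) (i j : Fin (2*l)) :
    uι (Hcar a) * Xg i j - Xg i j * uι (Hcar a)
      = valA (2*l) ((a i + a j) • YA i j) := by
  rw [Xg, uι_comm, Hcar_bracket_ePlus, uι_smul, _root_.map_smul, valA_YA]
  rfl

lemma sum_pairs (a : Fin (2*l) → ℂ) (q : Equiv.Perm (Fin (2*l))) :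
    ∑ h : Fin l, (a (q (d0 l h)) + a (q (d1 l h))) = ∑ x, a x := by
  have e1 : ∑ x : Fin (2*l), a x = ∑ x : Fin (2*l), a (q x) :=
    (Equiv.sum_comp q a).symm
  have e2 : ∑ x : Fin (2*l), a (q x) = ∑ hs : Fin l × Bool, a (q (eFB l hs)) :=
    (Equiv.sum_comp (eFB l) (fun x => a (q x))).symm
  rw [e1, e2, Fintype.sum_prod_type]
  refine (Finset.sum_congr rfl fun h _ => ?_).symm
  rw [Fintype.sum_bool, eFB_true, eFB_false]
  exact add_comm _ _

lemma D_WP_H (a : Fin (2*l) → ℂ) (σ : Equiv.Perm (Fin (2*l))) :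
    uι (Hcar a) * valA (2*l) (WP l ⇑σ) - valA (2*l) (WP l ⇑σ) * uι (Hcar a)
      = (∑ x, a x) • valA (2*l) (WP l ⇑σ) := by
  rw [WP, D_prod (uι (Hcar a)) _
      (fun h => (a (σ (d0 l h)) + a (σ (d1 l h))) • YA (σ (d0 l h)) (σ (d1 l h)))
      (fun h => D_Xg_H a _ _) Finset.univ]
  have key : (∑ h : Fin l, (∏ h' ∈ Finset.univ.erase h, YA (σ (d0 l h')) (σ (d1 l h')))
      * ((a (σ (d0 l h)) + a (σ (d1 l h))) • YA (σ (d0 l h)) (σ (d1 l h))))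
      = (∑ x, a x) • ∏ h : Fin l, YA (σ (d0 l h)) (σ (d1 l h)) := by
    have hterm : ∀ h ∈ (Finset.univ : Finset (Fin l)),
        (∏ h' ∈ Finset.univ.erase h, YA (σ (d0 l h')) (σ (d1 l h')))
          * ((a (σ (d0 l h)) + a (σ (d1 l h))) • YA (σ (d0 l h)) (σ (d1 l h)))
        = (a (σ (d0 l h)) + a (σ (d1 l h))) • ∏ h' : Fin l, YA (σ (d0 l h')) (σ (d1 l h')) := by
      intro h _
      rw [mul_smul_comm, Finset.prod_erase_mul _ _ (Finset.mem_univ h)]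
    rw [Finset.sum_congr rfl hterm, ← Finset.sum_smul, sum_pairs a σ]
  rw [key, _root_.map_smul]

lemma D_sum_smul {ι : Type*} (E : Uso (2*l)) (s : Finset ι) (c : ι → ℂ) (u : ι → Uso (2*l)) :
    E * (∑ i ∈ s, c i • u i) - (∑ i ∈ s, c i • u i) * E
      = ∑ i ∈ s, c i • (E * u i - u i * E) := by
  rw [Finset.mul_sum, Finset.sum_mul, ← Finset.sum_sub_distrib]
  refine Finset.sum_congr rfl fun i _ => ?_
  rw [mul_smul_comm, smul_mul_assoc, smul_sub]

lemma Omega_expand : Omega l = ∑ p ∈ FPFI l, sgn l p • valA (2*l) (WP l ⇑(pbar l p)) := by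
  rw [← val_OmA, OmA, map_sum]
  exact Finset.sum_congr rfl fun p _ => _root_.map_smul _ _ _

lemma D_Omega_H (a : Fin (2*l) → ℂ) :
    uι (Hcar a) * Omega l - Omega l * uι (Hcar a) = (∑ x, a x) • Omega l := by
  rw [Omega_expand, D_sum_smul, Finset.smul_sum]
  refine Finset.sum_congr rfl fun p _ => ?_
  rw [D_WP_H a, smul_comm]

lemma D_pow (E u : Uso (2*l)) (lam : ℂ) (hD : E*u - u*E = lam • u) (n : ℕ) :
    E * u^n - u^n * E = ((n:ℂ) * lam) • u^n := by
  induction n with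
  | zero => simp
  | succ n ih =>
    rw [pow_succ, D_mul_id, ih, hD, smul_mul_assoc, mul_smul_comm, ← pow_succ, ← add_smul]
    congr 1
    push_cast
    ring

end HPart

section EPart

variable {l : ℕ}

lemma comm_E_Omega (k' m : Fin (2*l)) (hkm : k' ≠ m) :
    uι (eMinus k' m) * Omega l - Omega l * uι (eMinus k' m) = 0 := by
  have hval : valA (2*l) (ZA l) = ∑ σ : Equiv.Perm (Fin (2*l)), sgnC σ • valA (2*l) (WP l ⇑σ) := by
    rw [ZA, map_sum]
    exact Finset.sum_congr rfl fun σ _ => _root_.map_smul _ _ _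
  have hZ : uι (eMinus k' m) * valA (2*l) (ZA l) - valA (2*l) (ZA l) * uι (eMinus k' m) = 0 := by
    rw [hval, D_sum_smul]
    have hterm : ∀ σ ∈ (Finset.univ : Finset (Equiv.Perm (Fin (2*l)))),
        sgnC σ • (uι (eMinus k' m) * valA (2*l) (WP l ⇑σ)
          - valA (2*l) (WP l ⇑σ) * uι (eMinus k' m))
        = sgnC σ • valA (2*l) (WP l (Function.update id m k' ∘ ⇑σ)) := by
      intro σ _
      rw [D_WP k' m σ]
    rw [Finset.sum_congr rfl hterm]
    have : (∑ σ : Equiv.Perm (Fin (2*l)),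
        sgnC σ • valA (2*l) (WP l (Function.update id m k' ∘ ⇑σ)))
        = valA (2*l) (∑ σ : Equiv.Perm (Fin (2*l)),
            sgnC σ • WP l (Function.update id m k' ∘ ⇑σ)) := by
      rw [map_sum]
      exact (Finset.sum_congr rfl fun σ _ => (_root_.map_smul _ _ _).symm)
    rw [this, alt_sum (Function.update id m k') m k' hkm.symm
      (by rw [Function.update_self, Function.update_of_ne hkm]; rfl), _root_.map_zero]
  have hZOm : valA (2*l) (ZA l) = ((Cset l).card : ℂ) • Omega l := by
    rw [ZA_eq, _root_.map_smul, val_OmA]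
  rw [hZOm, mul_smul_comm, smul_mul_assoc, ← smul_sub] at hZ
  rcases smul_eq_zero.mp hZ with h | h
  · exact absurd h (Nat.cast_ne_zero.mpr (Nat.pos_iff_ne_zero.mp Cset_card_pos))
  · exact h

lemma commute_Xg_Omega (i j : Fin (2*l)) : Commute (Xg i j) (Omega l) := by
  rw [Omega]
  refine Commute.sum_right _ _ _ fun p _ => ?_
  refine Commute.smul_right ?_ _
  refine Commute.list_prod_right _ _ fun y hy => ?_
  rw [List.mem_map] at hy
  obtain ⟨i', _, rfl⟩ := hy
  exact Xg_comm i j i' (p i')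

end EPart
/-- Let `ℓ ≥ 2` and `n ≥ 1`. Then `Ω_ℓⁿ ∈ U(so(4ℓ, ℂ))` satisfies
(a) `[E, Ω_ℓⁿ] = 0` for every simple positive root vector `E` of `so(4ℓ, ℂ)`, and
(b) `[H(a), Ω_ℓⁿ] = n(a₁ + ⋯ + a_{2ℓ}) Ω_ℓⁿ` for every `a ∈ ℂ^{2ℓ}`; i.e. `Ω_ℓⁿ` is a
highest weight vector of weight `2nω_{2ℓ} = n(ε₁ + ⋯ + ε_{2ℓ})` for the adjoint action of
`so(4ℓ, ℂ)` on its universal enveloping algebra. -/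
theorem omega_pow_highest_weight_vector (l : ℕ) (hl : 2 ≤ l) (n : ℕ) (hn : 1 ≤ n) :
    (∀ (k : ℕ) (hk : k + 1 < 2*l),
      uι (eMinus (⟨k, by omega⟩ : Fin (2*l)) ⟨k+1, hk⟩) * Omega l ^ n
        - Omega l ^ n * uι (eMinus (⟨k, by omega⟩ : Fin (2*l)) ⟨k+1, hk⟩) = 0) ∧
    (uι (ePlus (⟨2*l-2, by omega⟩ : Fin (2*l)) ⟨2*l-1, by omega⟩) * Omega l ^ n
        - Omega l ^ n * uι (ePlus (⟨2*l-2, by omega⟩ : Fin (2*l)) ⟨2*l-1, by omega⟩) = 0) ∧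
    (∀ a : Fin (2*l) → ℂ,
      uι (Hcar a) * Omega l ^ n - Omega l ^ n * uι (Hcar a)
        = ((n : ℂ) * ∑ i, a i) • Omega l ^ n) := by
  refine ⟨?_, ?_, ?_⟩
  · intro k hk
    have hkm : (⟨k, by omega⟩ : Fin (2*l)) ≠ ⟨k+1, hk⟩ := by
      rw [ne_eq, Fin.mk.injEq]
      omega
    have h1 : Commute (uι (eMinus (⟨k, by omega⟩ : Fin (2*l)) ⟨k+1, hk⟩)) (Omega l) :=
      sub_eq_zero.mp (comm_E_Omega _ _ hkm)
    exact sub_eq_zero_of_eq (h1.pow_right n).eq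
  · have h1 : Commute (uι (ePlus (⟨2*l-2, by omega⟩ : Fin (2*l)) ⟨2*l-1, by omega⟩)) (Omega l) :=
      commute_Xg_Omega _ _
    exact sub_eq_zero_of_eq (h1.pow_right n).eq
  · intro a
    exact D_pow (uι (Hcar a)) (Omega l) (∑ x, a x) (D_Omega_H a) n

end
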